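/- Let (X,d) be a proper geodesic metric space and let ν be a Borel measure on X whose support is all of X and which is finite on bounded sets, satisfying the Bishop–Gromov inequality with parameters (K,N), where K ≤ 0 and 1 < N < ∞. Let ε > 0, let 𝒩 be a maximal ε-separated net in X, and let G(𝒩) be the associated discretization graph with combinatorial metric 𝐝. Then G(𝒩) is connected and the inclusion map (𝒩,𝐝) → (X,d) is a rough isometry; more precisely: (i) d(p,q) ≤ 2ε·𝐝(p,q) for all p,q ∈ 𝒩; (ii) there exist constants C₀, C₁ > 0 depending only on K, N and ε such that 𝐝(p,q) ≤ (C₀/ε)·d(p,q) + C₁ for all p,q ∈ 𝒩; and (iii) every point of X is within distance ε of 𝒩. -/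

import Mathlib

open MeasureTheory Metric

/-- The model volume density `S_K^N` for `K ≤ 0`, `1 < N < ∞`. -/
noncomputable def SKN (K N t : ℝ) : ℝ :=
  if K = 0 then t ^ (N - 1)
  else Real.sinh (Real.sqrt (|K| / (N - 1)) * t) ^ (N - 1)

/-- A Borel measure `ν` of full support satisfies the Bishop–Gromov inequality with
parameters `(K, N)` if for every `x` the function
`r ↦ ν(B(x,r)) / ∫₀^r S_K^N(t) dt` is nonincreasing on `(0, ∞)`. -/
def BishopGromov {X : Type*} [MetricSpace X] [MeasurableSpace X]
    (ν : Measure X) (K N : ℝ) : Prop :=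
  ∀ x : X, AntitoneOn
    (fun r => (ν (ball x r)).toReal / ∫ t in (0:ℝ)..r, SKN K N t) (Set.Ioi 0)

/-- A metric space is geodesic if every pair of points is joined by a geodesic
(an isometric image of a real interval). -/
def IsGeodesicSpace (X : Type*) [MetricSpace X] : Prop :=
  ∀ x y : X, ∃ f : ℝ → X, f 0 = x ∧ f (dist x y) = y ∧
    ∀ s ∈ Set.Icc (0:ℝ) (dist x y), ∀ t ∈ Set.Icc (0:ℝ) (dist x y),
      dist (f s) (f t) = |s - t|

/-- A subset `𝒩` of a metric space is `ε`-separated if distinct points of `𝒩` are at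
distance at least `ε`. -/
def IsSeparated {X : Type*} [MetricSpace X] (𝒩 : Set X) (ε : ℝ) : Prop :=
  ∀ p ∈ 𝒩, ∀ q ∈ 𝒩, p ≠ q → ε ≤ dist p q

/-- A maximal `ε`-separated net: an `ε`-separated set maximal with respect to inclusion. -/
def IsMaximalNet {X : Type*} [MetricSpace X] (𝒩 : Set X) (ε : ℝ) : Prop :=
  IsSeparated 𝒩 ε ∧ ∀ M : Set X, 𝒩 ⊆ M → IsSeparated M ε → M = 𝒩

/-- The discretization graph `G(𝒩)`: vertices are points of `𝒩`, and distinct `p, q`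
are adjacent iff `B(p,ε) ∩ B(q,ε) ≠ ∅`, equivalently `dist p q < 2ε`. -/
def netGraph {X : Type*} [MetricSpace X] (𝒩 : Set X) (ε : ℝ) : SimpleGraph 𝒩 where
  Adj p q := p ≠ q ∧ dist (p : X) (q : X) < 2 * ε
  symm := by
    constructor
    intro p q h
    exact ⟨h.1.symm, by rw [dist_comm]; exact h.2⟩
  loopless := by
    constructor
    intro p h
    exact h.1 rfl



lemma SKN_continuous (K N : ℝ) (hN : 1 < N) : Continuous (SKN K N) := by
  have h1 : (0:ℝ) ≤ N - 1 := by linarith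
  unfold SKN
  by_cases h : K = 0
  · simp only [if_pos h]
    exact Real.continuous_rpow_const h1
  · simp only [if_neg h]
    rw [continuous_iff_continuousAt]
    intro t
    exact ((Real.continuous_sinh.comp (continuous_const.mul continuous_id)).continuousAt).rpow_const
      (Or.inr h1)

lemma SKN_pos (K N : ℝ) (hN : 1 < N) {t : ℝ} (ht : 0 < t) : 0 < SKN K N t := by
  unfold SKN
  by_cases h : K = 0
  · simp only [if_pos h]
    exact Real.rpow_pos_of_pos ht _
  · simp only [if_neg h]
    apply Real.rpow_pos_of_pos
    rw [Real.sinh_pos_iff]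
    exact mul_pos (Real.sqrt_pos.mpr (div_pos (abs_pos.mpr h) (by linarith))) ht

lemma SKN_nonneg (K N : ℝ) {t : ℝ} (ht : 0 ≤ t) : 0 ≤ SKN K N t := by
  unfold SKN
  by_cases h : K = 0
  · simp only [if_pos h]
    exact Real.rpow_nonneg ht _
  · simp only [if_neg h]
    exact Real.rpow_nonneg (Real.sinh_nonneg_iff.mpr (mul_nonneg (Real.sqrt_nonneg _) ht)) _

lemma vSKN_pos (K N : ℝ) (hN : 1 < N) {r : ℝ} (hr : 0 < r) :
    0 < ∫ t in (0:ℝ)..r, SKN K N t := by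
  apply intervalIntegral.intervalIntegral_pos_of_pos_on
    ((SKN_continuous K N hN).intervalIntegrable _ _)
  · exact fun t ht => SKN_pos K N hN ht.1
  · exact hr

lemma vSKN_mono (K N : ℝ) (hN : 1 < N) {r₁ r₂ : ℝ} (h0 : 0 ≤ r₁) (h12 : r₁ ≤ r₂) :
    (∫ t in (0:ℝ)..r₁, SKN K N t) ≤ ∫ t in (0:ℝ)..r₂, SKN K N t := by
  have hi : ∀ a b : ℝ, IntervalIntegrable (SKN K N) volume a b :=
    fun a b => (SKN_continuous K N hN).intervalIntegrable _ _
  have hadd := intervalIntegral.integral_add_adjacent_intervals (hi 0 r₁) (hi r₁ r₂)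
  have hnn : 0 ≤ ∫ t in r₁..r₂, SKN K N t :=
    intervalIntegral.integral_nonneg h12 (fun u hu => SKN_nonneg K N (le_trans h0 hu.1))
  linarith

theorem stmt_9 {X : Type*} [MetricSpace X] [ProperSpace X]
    [MeasurableSpace X] [BorelSpace X]
    (hgeo : IsGeodesicSpace X)
    (ν : Measure X)
    (hfull : ∀ x : X, ∀ r > (0:ℝ), 0 < ν (ball x r))
    (hbdd : ∀ s : Set X, Bornology.IsBounded s → ν s < ⊤)
    (K N : ℝ) (hK : K ≤ 0) (hN : 1 < N)
    (hBG : BishopGromov ν K N)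
    (ε : ℝ) (hε : 0 < ε) (𝒩 : Set X) (hnet : IsMaximalNet 𝒩 ε) (h𝒩 : 𝒩.Nonempty) :
    (netGraph 𝒩 ε).Connected ∧
    (∀ p q : 𝒩, dist (p : X) (q : X) ≤ 2 * ε * ((netGraph 𝒩 ε).dist p q : ℝ)) ∧
    (∃ C₀ > (0:ℝ), ∃ C₁ > (0:ℝ), ∀ p q : 𝒩,
      ((netGraph 𝒩 ε).dist p q : ℝ) ≤ (C₀ / ε) * dist (p : X) (q : X) + C₁) ∧
    (∀ x : X, ∃ p ∈ 𝒩, dist x p ≤ ε) := by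
  classical
  set v : ℝ → ℝ := fun r => ∫ t in (0:ℝ)..r, SKN K N t with hvdef
  have hvpos : ∀ {r : ℝ}, 0 < r → 0 < v r := fun hr => vSKN_pos K N hN hr
  -- covering radius
  have hcov : ∀ x : X, ∃ p ∈ 𝒩, dist x p < ε := by
    intro x
    by_cases hx : x ∈ 𝒩
    · exact ⟨x, hx, by simpa using hε⟩
    by_contra hcon
    push_neg at hcon
    have hsep : IsSeparated (insert x 𝒩) ε := by
      intro p hp q hq hpq
      rcases Set.mem_insert_iff.1 hp with hpx | hp'
      · rcases Set.mem_insert_iff.1 hq with hqx | hq'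
        · exact absurd (hpx.trans hqx.symm) hpq
        · rw [hpx]; exact hcon q hq'
      · rcases Set.mem_insert_iff.1 hq with hqx | hq'
        · rw [hqx, dist_comm]; exact hcon p hp'
        · exact hnet.1 p hp' q hq' hpq
    have heq := hnet.2 _ (Set.subset_insert x 𝒩) hsep
    exact hx (heq ▸ Set.mem_insert x 𝒩)
  -- measure facts
  have hballfin : ∀ (x : X) (r : ℝ), ν (ball x r) ≠ ⊤ := fun x r => (hbdd _ isBounded_ball).ne
  have hVpos : ∀ (x : X) {r : ℝ}, 0 < r → 0 < (ν (ball x r)).toReal := fun x {r} hr =>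
    ENNReal.toReal_pos (hfull x r hr).ne' (hballfin x r)
  -- Bishop-Gromov consequence
  have hBG' : ∀ (y : X) {r₁ r₂ : ℝ}, 0 < r₁ → r₁ ≤ r₂ →
      (ν (ball y r₂)).toReal * v r₁ ≤ (ν (ball y r₁)).toReal * v r₂ := by
    intro y r₁ r₂ h1 h12
    have h2 : 0 < r₂ := lt_of_lt_of_le h1 h12
    have := hBG y (Set.mem_Ioi.mpr h1) (Set.mem_Ioi.mpr h2) h12
    rwa [div_le_div_iff₀ (hvpos h2) (hvpos h1)] at this
  -- packing bound for finite subsets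
  have hpack : ∀ (x : X) (R : ℝ), 0 < R → ∀ F : Finset X, (↑F : Set X) ⊆ 𝒩 ∩ closedBall x R →
      (F.card : ℝ) ≤ v (2*R + ε/2) / v (ε/2) := by
    intro x R hR F hF
    have hε2 : 0 < ε/2 := by linarith
    have hR2 : 0 < 2*R + ε/2 := by linarith
    set V : ℝ := (ν (ball x (R + ε/2))).toReal with hVdef
    have hV : 0 < V := hVpos x (by linarith)
    have key : ∀ y ∈ F, V * v (ε/2) ≤ (ν (ball y (ε/2))).toReal * v (2*R + ε/2) := by
      intro y hy
      obtain ⟨hy𝒩, hyx⟩ := hF hy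
      have hdyx : dist y x ≤ R := mem_closedBall.mp hyx
      have hsub : ball x (R + ε/2) ⊆ ball y (2*R + ε/2) := by
        intro z hz
        rw [mem_ball] at hz ⊢
        have h3 : dist z y ≤ dist z x + dist x y := dist_triangle _ _ _
        rw [dist_comm x y] at h3
        linarith
      have h1 : V ≤ (ν (ball y (2*R + ε/2))).toReal :=
        (ENNReal.toReal_le_toReal (hballfin _ _) (hballfin _ _)).mpr (measure_mono hsub)
      have h2 := hBG' y hε2 (by linarith : ε/2 ≤ 2*R + ε/2)
      calc V * v (ε/2) ≤ (ν (ball y (2*R+ε/2))).toReal * v (ε/2) :=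
            mul_le_mul_of_nonneg_right h1 (hvpos hε2).le
        _ ≤ (ν (ball y (ε/2))).toReal * v (2*R+ε/2) := h2
    have hdisj : (↑F : Set X).PairwiseDisjoint (fun y => ball y (ε/2)) := by
      intro y hy y' hy' hne
      have hsep := hnet.1 y (hF hy).1 y' (hF hy').1 hne
      exact ball_disjoint_ball (by linarith)
    have hsum : ∑ y ∈ F, ν (ball y (ε/2)) ≤ ν (ball x (R + ε/2)) := by
      rw [← measure_biUnion_finset hdisj (fun y _ => measurableSet_ball)]
      apply measure_mono
      intro z hz
      simp only [Set.mem_iUnion] at hz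
      obtain ⟨y, hy, hzy⟩ := hz
      rw [mem_ball] at hzy ⊢
      have h3 : dist z x ≤ dist z y + dist y x := dist_triangle _ _ _
      have h4 : dist y x ≤ R := (hF hy).2
      linarith
    have hsumR : ∑ y ∈ F, (ν (ball y (ε/2))).toReal ≤ V := by
      rw [← ENNReal.toReal_sum (fun y _ => hballfin y _)]
      exact ENNReal.toReal_mono (hballfin _ _) hsum
    have hcard : (F.card : ℝ) * (V * v (ε/2)) ≤ V * v (2*R + ε/2) := by
      have h5 := Finset.card_nsmul_le_sum F _ _ key
      rw [nsmul_eq_mul] at h5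
      calc (F.card:ℝ) * (V * v (ε/2))
          ≤ ∑ y ∈ F, (ν (ball y (ε/2))).toReal * v (2*R+ε/2) := h5
        _ = (∑ y ∈ F, (ν (ball y (ε/2))).toReal) * v (2*R+ε/2) := by rw [Finset.sum_mul]
        _ ≤ V * v (2*R+ε/2) := mul_le_mul_of_nonneg_right hsumR (hvpos hR2).le
    rw [le_div_iff₀ (hvpos hε2)]
    nlinarith [hcard, hV]
  -- finiteness and cardinality of net points in balls
  have hfin : ∀ (x : X) (R : ℝ), 0 < R → (𝒩 ∩ closedBall x R).Finite ∧
      ((𝒩 ∩ closedBall x R).ncard : ℝ) ≤ v (2*R + ε/2) / v (ε/2) := by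
    intro x R hR
    have hFin : (𝒩 ∩ closedBall x R).Finite := by
      by_contra hinf
      have hinf' : (𝒩 ∩ closedBall x R).Infinite := hinf
      obtain ⟨t, hts, htf, htc⟩ :=
        hinf'.exists_subset_ncard_eq
          (⌈v (2*R+ε/2) / v (ε/2)⌉₊ + 1)
      have hb := hpack x R hR htf.toFinset (by rwa [Set.Finite.coe_toFinset])
      rw [← Set.ncard_eq_toFinset_card _ htf, htc] at hb
      have hle := Nat.le_ceil (v (2*R+ε/2) / v (ε/2))
      push_cast at hb
      linarith
    refine ⟨hFin, ?_⟩
    have hb := hpack x R hR hFin.toFinset (by rw [Set.Finite.coe_toFinset])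
    rwa [← Set.ncard_eq_toFinset_card _ hFin] at hb
  -- chain lemma
  have hchain : ∀ n : ℕ, ∀ a b : 𝒩,
      (𝒩 ∩ closedBall (b:X) (dist (a:X) (b:X))).Finite →
      (𝒩 ∩ closedBall (b:X) (dist (a:X) (b:X))).ncard ≤ n →
      ∃ w : (netGraph 𝒩 ε).Walk a b, w.length ≤ n := by
    intro n
    induction n with
    | zero =>
      intro a b hSfin hcard
      exfalso
      have hmem : (a:X) ∈ 𝒩 ∩ closedBall (b:X) (dist (a:X) (b:X)) :=
        ⟨a.2, mem_closedBall.mpr le_rfl⟩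
      have hpos := (Set.ncard_pos hSfin).mpr ⟨_, hmem⟩
      omega
    | succ n ih =>
      intro a b hSfin hcard
      by_cases hab : a = b
      · subst hab; exact ⟨SimpleGraph.Walk.nil, by simp⟩
      by_cases hd : dist (a:X) (b:X) < 2*ε
      · exact ⟨SimpleGraph.Walk.cons ⟨hab, hd⟩ SimpleGraph.Walk.nil, by exact Nat.succ_le_succ (Nat.zero_le n)⟩
      push_neg at hd
      set d := dist (a:X) (b:X) with hddef
      obtain ⟨f, hf0, hfd, hfI⟩ := hgeo (a:X) (b:X)
      have hεd : ε ≤ d := le_trans (by linarith) hd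
      have hdpos : 0 < d := lt_of_lt_of_le (by linarith : (0:ℝ) < 2*ε) hd
      have hmem0 : (0:ℝ) ∈ Set.Icc (0:ℝ) d := ⟨le_rfl, hdpos.le⟩
      have hmemε : ε ∈ Set.Icc (0:ℝ) d := ⟨hε.le, hεd⟩
      have hmemd : d ∈ Set.Icc (0:ℝ) d := ⟨hdpos.le, le_rfl⟩
      have hax : dist (a:X) (f ε) = ε := by
        have h6 := hfI 0 hmem0 ε hmemε
        rw [hf0] at h6
        rw [h6, zero_sub, abs_neg, abs_of_nonneg hε.le]
      have hxb : dist (f ε) (b:X) = d - ε := by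
        have h6 := hfI ε hmemε d hmemd
        rw [hfd] at h6
        rw [h6, abs_of_nonpos (by linarith : ε - d ≤ 0)]
        ring
      obtain ⟨a', ha'𝒩, ha'⟩ := hcov (f ε)
      set a'' : 𝒩 := ⟨a', ha'𝒩⟩ with ha''def
      have hne : a ≠ a'' := by
        intro h
        have hcoe : (a:X) = a' := congrArg Subtype.val h
        rw [← hcoe, dist_comm (f ε) (a:X), hax] at ha'
        exact lt_irrefl _ ha'
      have hadj : (netGraph 𝒩 ε).Adj a a'' := by
        refine ⟨hne, ?_⟩
        calc dist (a:X) (a'':X) ≤ dist (a:X) (f ε) + dist (f ε) a' := dist_triangle _ _ _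
          _ < ε + ε := by rw [hax]; linarith [ha']
          _ = 2*ε := by ring
      have ha'b : dist (a'':X) (b:X) < d := by
        calc dist (a'':X) (b:X) ≤ dist (a':X) (f ε) + dist (f ε) (b:X) := dist_triangle _ _ _
          _ < ε + (d - ε) := by rw [hxb]; rw [dist_comm]; linarith [ha']
          _ = d := by ring
      have hsub : 𝒩 ∩ closedBall (b:X) (dist (a'':X) (b:X)) ⊆
          (𝒩 ∩ closedBall (b:X) d) \ {(a:X)} := by
        intro r hr
        refine ⟨⟨hr.1, mem_closedBall.mpr (le_trans (mem_closedBall.mp hr.2) ha'b.le)⟩, ?_⟩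
        intro hra
        rw [Set.mem_singleton_iff] at hra
        subst hra
        have := mem_closedBall.mp hr.2
        rw [← hddef] at this
        linarith
      have hfin' : (𝒩 ∩ closedBall (b:X) (dist (a'':X) (b:X))).Finite :=
        hSfin.subset (hsub.trans Set.diff_subset)
      have hamem : (a:X) ∈ 𝒩 ∩ closedBall (b:X) d := ⟨a.2, mem_closedBall.mpr le_rfl⟩
      have hcard' : (𝒩 ∩ closedBall (b:X) (dist (a'':X) (b:X))).ncard ≤ n := by
        have h1 := Set.ncard_le_ncard hsub hSfin.diff
        have h2 := Set.ncard_diff_singleton_of_mem hamem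
        omega
      obtain ⟨w, hw⟩ := ih a'' b hfin' hcard'
      exact ⟨SimpleGraph.Walk.cons hadj w, by simp [Nat.succ_le_succ hw]⟩
  -- connectivity
  haveI : Nonempty 𝒩 := h𝒩.to_subtype
  have hreach : ∀ a b : 𝒩, (netGraph 𝒩 ε).Reachable a b := by
    intro a b
    by_cases hab : a = b
    · subst hab; exact SimpleGraph.Reachable.refl _
    · have hdpos : 0 < dist (a:X) (b:X) :=
        dist_pos.mpr (fun h => hab (Subtype.ext h))
      obtain ⟨hSfin, -⟩ := hfin (b:X) (dist (a:X) (b:X)) hdpos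
      obtain ⟨w, -⟩ := hchain _ a b hSfin le_rfl
      exact ⟨w⟩
  have hconn : (netGraph 𝒩 ε).Connected := ⟨hreach⟩
  -- lower bound (ii)
  have hlower : ∀ p q : 𝒩, dist (p:X) (q:X) ≤ 2*ε*((netGraph 𝒩 ε).dist p q : ℝ) := by
    intro p q
    obtain ⟨w, hw⟩ := (hreach p q).exists_walk_length_eq_dist
    rw [← hw]
    clear hw
    induction w with
    | nil => simp
    | @cons u u' q' h w ih =>
      have h7 : dist (u:X) (q':X) ≤ dist (u:X) (u':X) + dist (u':X) (q':X) := dist_triangle _ _ _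
      simp only [SimpleGraph.Walk.length_cons]
      push_cast
      have := h.2
      nlinarith [ih, hε]
  -- step bound
  set C : ℝ := v (2*(3*ε) + ε/2) / v (ε/2) with hCdef
  have hCpos : 0 < C := div_pos (hvpos (by linarith)) (hvpos (by linarith))
  have hstep : ∀ a b : 𝒩, dist (a:X) (b:X) < 3*ε → ((netGraph 𝒩 ε).dist a b : ℝ) ≤ C := by
    intro a b hab3
    by_cases hab : a = b
    · subst hab
      simp only [SimpleGraph.dist_self, Nat.cast_zero]
      exact hCpos.le
    have hdpos : 0 < dist (a:X) (b:X) := dist_pos.mpr (fun h => hab (Subtype.ext h))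
    obtain ⟨hSfin, -⟩ := hfin (b:X) _ hdpos
    obtain ⟨w, hw⟩ := hchain _ a b hSfin le_rfl
    have h1 : (netGraph 𝒩 ε).dist a b ≤ (𝒩 ∩ closedBall (b:X) (dist (a:X) (b:X))).ncard :=
      le_trans (SimpleGraph.dist_le w) hw
    obtain ⟨hBfin, hBcard⟩ := hfin (b:X) (3*ε) (by linarith)
    have h2 : (𝒩 ∩ closedBall (b:X) (dist (a:X) (b:X))).ncard ≤
        (𝒩 ∩ closedBall (b:X) (3*ε)).ncard :=
      Set.ncard_le_ncard (Set.inter_subset_inter_right _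
        (closedBall_subset_closedBall hab3.le)) hBfin
    calc ((netGraph 𝒩 ε).dist a b : ℝ) ≤ ((𝒩 ∩ closedBall (b:X) (3*ε)).ncard : ℝ) := by
          exact_mod_cast le_trans h1 h2
      _ ≤ C := hBcard
  -- upper bound (iii)
  have hupper : ∀ p q : 𝒩, ((netGraph 𝒩 ε).dist p q : ℝ) ≤ (C/ε) * dist (p:X) (q:X) + C := by
    intro p q
    set d := dist (p:X) (q:X) with hd
    have hd0 : 0 ≤ d := dist_nonneg
    rcases eq_or_lt_of_le hd0 with hd0' | hdpos
    · have hpq : p = q := Subtype.ext (dist_eq_zero.mp hd0'.symm)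
      subst hpq
      simp only [SimpleGraph.dist_self, Nat.cast_zero]
      rw [← hd0']
      nlinarith [hCpos]
    · set m : ℕ := ⌈d/ε⌉₊ with hm
      have hm1 : 1 ≤ m := Nat.one_le_ceil_iff.mpr (div_pos hdpos hε)
      have hmpos : (0:ℝ) < (m:ℝ) := by exact_mod_cast hm1
      have hmd : d / (m:ℝ) ≤ ε := by
        rw [div_le_iff₀ hmpos]
        have h8 := Nat.le_ceil (d/ε)
        rw [div_le_iff₀ hε] at h8
        linarith
      have hmne : (m:ℝ) ≠ 0 := ne_of_gt hmpos
      have hεne : ε ≠ 0 := ne_of_gt hε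
      obtain ⟨f, hf0, hfd, hfI⟩ := hgeo (p:X) (q:X)
      have hyI : ∀ j : ℕ, j ≤ m → (j:ℝ) * (d/m) ∈ Set.Icc (0:ℝ) d := by
        intro j hj
        constructor
        · positivity
        · have hjm : (j:ℝ) ≤ (m:ℝ) := by exact_mod_cast hj
          have h1 := mul_le_mul_of_nonneg_right hjm (show (0:ℝ) ≤ d/m by positivity)
          have h2 : (m:ℝ)*(d/m) = d := by field_simp
          linarith
      have hch : ∀ j : ℕ, ∃ z : 𝒩,
          dist ((z:X)) (f ((j:ℝ)*(d/m))) < ε ∧ (j = 0 → z = p) ∧ (j = m → z = q) := by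
        intro j
        by_cases h0 : j = 0
        · subst h0
          refine ⟨p, ?_, fun _ => rfl, fun hm0 => absurd hm0.symm (by omega)⟩
          simp only [Nat.cast_zero, zero_mul, hf0]
          simpa using hε
        by_cases hjm : j = m
        · subst hjm
          refine ⟨q, ?_, fun h => absurd h h0, fun _ => rfl⟩
          have h9 : (m:ℝ)*(d/m) = d := by field_simp
          rw [h9, hfd]
          simpa using hε
        · obtain ⟨z', hz𝒩, hz'⟩ := hcov (f ((j:ℝ)*(d/m)))
          exact ⟨⟨z', hz𝒩⟩, by rw [dist_comm]; exact hz', fun h => absurd h h0,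
            fun h => absurd h hjm⟩
      choose z hz hz0 hzm using hch
      have hcons : ∀ j : ℕ, j + 1 ≤ m → dist ((z j : X)) ((z (j+1) : X)) < 3*ε := by
        intro j hj
        have hjm : j ≤ m := by omega
        have hj1 : ((j+1:ℕ):ℝ) * (d/m) ∈ Set.Icc (0:ℝ) d := hyI (j+1) hj
        have hyy : dist (f ((j:ℝ)*(d/m))) (f (((j+1:ℕ):ℝ)*(d/m))) = d/m := by
          rw [hfI _ (hyI j hjm) _ hj1]
          push_cast
          have h10 : (j:ℝ)*(d/m) - ((j:ℝ)+1)*(d/m) = -(d/m) := by ring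
          rw [h10, abs_neg, abs_of_nonneg (by positivity)]
        have htri := dist_triangle4 ((z j : X)) (f ((j:ℝ)*(d/m)))
          (f (((j+1:ℕ):ℝ)*(d/m))) ((z (j+1) : X))
        have h11 := hz j
        have h12 := hz (j+1)
        rw [dist_comm] at h12
        rw [hyy] at htri
        push_cast at htri h12 ⊢
        linarith
      have hind : ∀ j : ℕ, j ≤ m → ((netGraph 𝒩 ε).dist p (z j) : ℝ) ≤ j * C := by
        intro j
        induction j with
        | zero =>
          intro _
          rw [hz0 0 rfl]
          simp [SimpleGraph.dist_self]
        | succ j ihj =>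
          intro hj
          have h1 := ihj (by omega)
          have h2 := hstep (z j) (z (j+1)) (hcons j hj)
          have htri := hconn.dist_triangle (u := p) (v := z j) (w := z (j+1))
          push_cast
          calc ((netGraph 𝒩 ε).dist p (z (j+1)) : ℝ)
              ≤ ((netGraph 𝒩 ε).dist p (z j) : ℝ) +
                ((netGraph 𝒩 ε).dist (z j) (z (j+1)) : ℝ) := by exact_mod_cast htri
            _ ≤ j*C + C := add_le_add h1 h2
            _ = ((j:ℝ)+1)*C := by ring
      have hfinal := hind m le_rfl
      rw [hzm m rfl] at hfinal
      have hmle : (m:ℝ) ≤ d/ε + 1 := by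
        have := Nat.ceil_lt_add_one (by positivity : (0:ℝ) ≤ d/ε)
        rw [hm]
        push_cast
        linarith
      calc ((netGraph 𝒩 ε).dist p q : ℝ) ≤ m*C := hfinal
        _ ≤ (d/ε + 1)*C := mul_le_mul_of_nonneg_right hmle hCpos.le
        _ = (C/ε)*d + C := by field_simp
  refine ⟨hconn, hlower, ⟨C, hCpos, C, hCpos, hupper⟩, fun x => ?_⟩
  obtain ⟨p, hp, hdp⟩ := hcov x
  exact ⟨p, hp, hdp.le⟩
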